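/- If K is a symmetric positive definite m×m matrix, μ > 0, and P̃ ∈ ℝ^{(d+1)×m}, then the block matrix Δ = [[P̃·P̃ᵀ, P̃·K],[K·P̃ᵀ, K·K + μ·K]] is positive definite if and only if P̃·P̃ᵀ is positive definite. -/

import Mathlib

open Matrix

lemma taux {n p : Type*} [Fintype n] [Fintype p] (A : Matrix n p ℝ) (u : n → ℝ) (w : p → ℝ) :
    (Aᵀ *ᵥ u) ⬝ᵥ w = u ⬝ᵥ (A *ᵥ w) := by
  rw [dotProduct_mulVec, ← mulVec_transpose]

lemma quad_key (d m : ℕ) (K : Matrix (Fin m) (Fin m) ℝ) (hK : K.IsHermitian)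
    (μ : ℝ) (P : Matrix (Fin (d + 1)) (Fin m) ℝ)
    (z : (Fin (d+1)) ⊕ (Fin m) → ℝ) :
    z ⬝ᵥ ((Matrix.fromBlocks (P * Pᵀ) (P * K) (K * Pᵀ) (K * K + μ • K)) *ᵥ z)
      = (Pᵀ *ᵥ (z ∘ Sum.inl) + K *ᵥ (z ∘ Sum.inr)) ⬝ᵥ (Pᵀ *ᵥ (z ∘ Sum.inl) + K *ᵥ (z ∘ Sum.inr))
        + μ * ((z ∘ Sum.inr) ⬝ᵥ (K *ᵥ (z ∘ Sum.inr))) := by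
  have hKt : Kᵀ = K := hK
  set x := z ∘ Sum.inl
  set y := z ∘ Sum.inr
  have hz : z = Sum.elim x y := by ext (i|i) <;> rfl
  rw [fromBlocks_mulVec]
  conv_lhs => rw [hz]
  rw [sumElim_dotProduct_sumElim]
  simp only [dotProduct_add, add_dotProduct, add_mulVec, smul_mulVec, dotProduct_smul,
    ← mulVec_mulVec, smul_eq_mul]
  simp only [Sum.elim_comp_inl, Sum.elim_comp_inr]
  rw [taux P x, taux P x, ← hKt, taux K y, taux K y, hKt]
  ring

/-- For `K` symmetric positive definite and `μ > 0`, the block matrix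
`Δ = [[P̃P̃ᵀ, P̃K],[KP̃ᵀ, KK + μK]]` is positive definite iff `P̃P̃ᵀ` is. -/
theorem stmt2 (d m : ℕ) (K : Matrix (Fin m) (Fin m) ℝ) (hK : K.PosDef)
    (μ : ℝ) (hμ : 0 < μ) (P : Matrix (Fin (d + 1)) (Fin m) ℝ) :
    (Matrix.fromBlocks (P * Pᵀ) (P * K) (K * Pᵀ) (K * K + μ • K)).PosDef
      ↔ (P * Pᵀ).PosDef := by
  have hconj : ∀ {a b : Type} [Fintype a] [Fintype b] (A : Matrix a b ℝ), Aᴴ = Aᵀ := by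
    intro a b _ _ A; ext i j; simp [conjTranspose_apply]
  have hKt : Kᵀ = K := by rw [← hconj]; exact hK.1
  have hPPt : (P * Pᵀ).IsHermitian := by
    rw [Matrix.IsHermitian, hconj, transpose_mul, transpose_transpose]
  constructor
  · intro hΔ
    refine .of_dotProduct_mulVec_pos hPPt fun x hx => ?_
    have hz : (Sum.elim x (0 : Fin m → ℝ)) ≠ 0 := by
      intro h
      apply hx
      ext i
      exact congrFun h (Sum.inl i)
    have := hΔ.dotProduct_mulVec_pos hz
    rw [show star (Sum.elim x (0 : Fin m → ℝ)) = Sum.elim x 0 from rfl] at this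
    rw [quad_key d m K hK.1 μ P] at this
    simpa [taux P x (Pᵀ *ᵥ x), mulVec_mulVec] using this
  · intro hP
    refine .of_dotProduct_mulVec_pos ?_ ?_
    · rw [Matrix.IsHermitian, hconj, fromBlocks_transpose]
      simp [transpose_mul, transpose_add, hKt]
    · intro z hz
      rw [show star z = z from rfl, quad_key d m K hK.1 μ P]
      set x := z ∘ Sum.inl with hxdef
      set y := z ∘ Sum.inr with hydef
      have hnn : 0 ≤ (Pᵀ *ᵥ x + K *ᵥ y) ⬝ᵥ (Pᵀ *ᵥ x + K *ᵥ y) := by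
        simpa using dotProduct_self_star_nonneg (Pᵀ *ᵥ x + K *ᵥ y)
      by_cases hy : y = 0
      · have hx : x ≠ 0 := by
          intro h
          apply hz
          ext (i|i)
          · exact congrFun h i
          · exact congrFun hy i
        have h1 := hP.dotProduct_mulVec_pos hx
        rw [show star x = x from rfl] at h1
        have h2 : (Pᵀ *ᵥ x + K *ᵥ y) ⬝ᵥ (Pᵀ *ᵥ x + K *ᵥ y)
            = x ⬝ᵥ (P * Pᵀ) *ᵥ x := by
          rw [hy]
          simp [taux P x (Pᵀ *ᵥ x), mulVec_mulVec]
        rw [h2, hy]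
        simpa using h1
      · have h1 := hK.dotProduct_mulVec_pos hy
        rw [show star y = y from rfl] at h1
        have : 0 < μ * (y ⬝ᵥ K *ᵥ y) := mul_pos hμ h1
        linarith
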